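/- If a triangle-free oriented graph G has a cut vertex, then G has a full in-star cutset or G has a vertex of degree at most 1. -/

import Mathlib

/-- An oriented graph on vertex type `V`: an irreflexive, asymmetric arc relation. -/
structure OrientedGraph (V : Type) where
  arc : V → V → Prop
  irrefl : ∀ v, ¬ arc v v
  asymm : ∀ u v, arc u v → ¬ arc v u

/-- A Burling tree `(T, root, lastBorn, choose)`.  The tree is encoded by its parent
function (with `parent root = root`); `lastBorn v` is a distinguished child of each
non-leaf `v`; `choose v` is the vertex set of a (possibly empty) branch of the tree
starting at the last-born of the parent of `v` when `v` is neither the root nor a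
last-born, and is empty otherwise. -/
structure BurlingTree (V : Type) where
  root : V
  parent : V → V
  parent_root : parent root = root
  reaches_root : ∀ v, ∃ n, parent^[n] v = root
  lastBorn : V → V
  lastBorn_child : ∀ v w, w ≠ root → parent w = v →
    lastBorn v ≠ root ∧ parent (lastBorn v) = v
  choose : V → Set V
  choose_root : choose root = ∅
  choose_lastBorn : ∀ v, v ≠ root → lastBorn (parent v) = v → choose v = ∅
  choose_branch : ∀ v, v ≠ root → lastBorn (parent v) ≠ v →
    choose v = ∅ ∨ ∃ b, (∃ n, parent^[n] b = lastBorn (parent v)) ∧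
      choose v = {x | (∃ n, parent^[n] x = lastBorn (parent v)) ∧ ∃ n, parent^[n] b = x}

namespace BurlingTree

variable {V : Type} (T : BurlingTree V)

/-- `u` is an ancestor of `v` in `T` (possibly `u = v`). -/
def Anc (u v : V) : Prop := ∃ n, T.parent^[n] v = u

/-- Arc relation of the oriented graph derived from `T` with vertex set `S`
(the induced subgraph, on `S`, of the graph fully derived from `T`). -/
def Arc (S : Set V) (u v : V) : Prop := u ∈ S ∧ v ∈ S ∧ v ∈ T.choose u

/-- Underlying undirected graph of the derived graph on `S`. -/
def UGraph (S : Set V) : SimpleGraph V := SimpleGraph.fromRel (T.Arc S)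

/-- Closed in-neighborhood `N⁻[v]` in the derived graph on `S`. -/
def InNbhd (S : Set V) (v : V) : Set V := insert v {u | T.Arc S u v}

/-- The top-set of the derived graph on `S`: vertices of `S` that are the unique
vertex of `S` on the branch of `T` from the root to them. -/
def TopSet (S : Set V) : Set V := {v | v ∈ S ∧ ∀ x ∈ S, T.Anc x v → x = v}

end BurlingTree

/-- Reachability between `u` and `w` inside the set `A` of vertices of `G`. -/
def ReachIn {V : Type} (G : SimpleGraph V) (A : Set V) (u w : V) : Prop :=
  Relation.ReflTransGen (fun x y => x ∈ A ∧ y ∈ A ∧ G.Adj x y) u w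

/-- `N⁻[v]` is a full in-star cutset of the graph derived from `T` on `S`. -/
def BurlingTree.IsFullInStarCutset {V : Type} (T : BurlingTree V) (S : Set V) (v : V) : Prop :=
  ∃ a ∈ S \ T.InNbhd S v, ∃ b ∈ S \ T.InNbhd S v,
    ¬ ReachIn (T.UGraph S) (S \ T.InNbhd S v) a b

/-- The arc relation `A` is an in-forest: a disjoint union of orientations of rooted
trees with all edges oriented towards the root.  Equivalently: it is irreflexive and
asymmetric, its underlying graph is a forest, every vertex has at most one
out-neighbor, and from every vertex the unique outgoing directed path terminates in
a sink. -/
def IsInForestRel {V : Type} (A : V → V → Prop) : Prop :=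
  (∀ v, ¬ A v v) ∧ (∀ u v, A u v → ¬ A v u) ∧
  (SimpleGraph.fromRel A).IsAcyclic ∧
  (∀ u v w, A u v → A u w → v = w) ∧
  (∀ v, ∃ r, Relation.ReflTransGen A v r ∧ ∀ w, ¬ A r w)

/-- The arc relation `A` forms an in-tree on the vertex set `U`:
an in-forest all of whose vertices in `U` reach a common root. -/
def IsInTreeOn {V : Type} (A : V → V → Prop) (U : Set V) : Prop :=
  IsInForestRel A ∧ ∃ r ∈ U, ∀ v ∈ U, Relation.ReflTransGen A v r

/-- The graph with arc relation `A` and vertex set `U` is an oriented chandelier: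
it is obtained from an in-tree `G'` (on `U` minus an apex `v`) with at least two
leaves by adding the vertex `v` and exactly the arcs from each leaf of `G'` to `v`.
A leaf of the in-tree is a source having exactly one out-neighbor. -/
def ChandelierOn {V : Type} (A : V → V → Prop) (U : Set V) : Prop :=
  ∃ v ∈ U,
    IsInTreeOn (fun a b => A a b ∧ a ≠ v ∧ b ≠ v) (U \ {v}) ∧
    (∀ u, ¬ A v u) ∧
    (∀ u, A u v ↔ (u ∈ U ∧ u ≠ v ∧ (∀ w, ¬ (A w u ∧ w ≠ v ∧ u ≠ v)) ∧
       ∃ w, A u w ∧ w ≠ v ∧ u ≠ v)) ∧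
    (∃ u₁ u₂, u₁ ≠ u₂ ∧ A u₁ v ∧ A u₂ v)

namespace OrientedGraph

variable {V : Type} (G : OrientedGraph V)

/-- Underlying undirected simple graph of an oriented graph. -/
def toSimpleGraph : SimpleGraph V := SimpleGraph.fromRel G.arc

/-- `G` is an in-forest. -/
def IsInForest : Prop := IsInForestRel G.arc

/-- `G` is an oriented chandelier. -/
def IsChandelier : Prop := ChandelierOn G.arc Set.univ

/-- Closed in-neighborhood `N⁻[v]`. -/
def InNbhd (v : V) : Set V := insert v {u | G.arc u v}

/-- `G` has a full in-star cutset: for some vertex `v`, removing `N⁻[v]`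
disconnects the underlying graph. -/
def HasFullInStarCutset : Prop :=
  ∃ v, ∃ a ∈ (G.InNbhd v)ᶜ, ∃ b ∈ (G.InNbhd v)ᶜ,
    ¬ ReachIn G.toSimpleGraph (G.InNbhd v)ᶜ a b

/-- `v` is a cut vertex of `G`: some two vertices distinct from `v` are connected
in the underlying graph but disconnected after removing `v`. -/
def IsCutVertex (v : V) : Prop :=
  ∃ a b, a ≠ v ∧ b ≠ v ∧ G.toSimpleGraph.Reachable a b ∧
    ¬ ReachIn G.toSimpleGraph {v}ᶜ a b

/-- `G` is a `k`-Burling oriented graph: it is isomorphic to a graph derived from a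
Burling tree `T` such that every branch of `T` contains at most `k` vertices of `G`. -/
def IsKBurling (k : ℕ) : Prop :=
  ∃ (W : Type) (T : BurlingTree W) (f : V → W),
    Function.Injective f ∧
    (∀ u v, G.arc u v ↔ T.Arc (Set.range f) (f u) (f v)) ∧
    ∀ b : W, ({x | x ∈ Set.range f ∧ T.Anc x b}).ncard ≤ k

end OrientedGraph

/-- The graph with arc relation `A` on vertex set `U` is (isomorphic to) a graph
derived from some Burling tree. -/
def IsDerivedOn {V : Type} (A : V → V → Prop) (U : Set V) : Prop :=
  ∃ (W : Type) (T : BurlingTree W) (f : V → W),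
    Set.InjOn f U ∧ ∀ a ∈ U, ∀ b ∈ U, (A a b ↔ f b ∈ T.choose (f a))

/-- `C` is a hole of the graph derived from `T` on `S`: an induced cycle of length
at least 4 of the underlying graph (a finite set of at least four vertices whose
induced subgraph is connected and 2-regular). -/
def BurlingTree.IsHole {V : Type} (T : BurlingTree V) (S : Set V) (C : Set V) : Prop :=
  C ⊆ S ∧ C.Finite ∧ 4 ≤ C.ncard ∧
  (∀ x ∈ C, ({y | y ∈ C ∧ (T.UGraph S).Adj x y}).ncard = 2) ∧
  (∀ x ∈ C, ∀ y ∈ C, ReachIn (T.UGraph S) C x y)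

/-- `p` is the pivot of the hole `C`: a sink of the hole both of whose neighbors in
the hole are sources of the hole (the antennas). -/
def BurlingTree.IsPivotOf {V : Type} (T : BurlingTree V) (S : Set V) (C : Set V) (p : V) : Prop :=
  p ∈ C ∧ (∀ w ∈ C, ¬ T.Arc S p w) ∧
  (∀ q ∈ C, (T.UGraph S).Adj p q → ∀ w ∈ C, ¬ T.Arc S w q)

/-- If a triangle-free oriented graph `G` has a cut vertex, then `G`
has a full in-star cutset or `G` has a vertex of degree at most 1. -/
theorem stmt7 (V : Type) (G : OrientedGraph V)
    (htf : ∀ a b c : V, ¬ (G.toSimpleGraph.Adj a b ∧ G.toSimpleGraph.Adj b c ∧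
      G.toSimpleGraph.Adj a c))
    (hcut : ∃ v, G.IsCutVertex v) :
    G.HasFullInStarCutset ∨ ∃ v : V, ({u | G.toSimpleGraph.Adj v u}).Subsingleton := by
  obtain ⟨v, a, b, ha, hb, _, hnot⟩ := hcut
  have hadj_arc : ∀ x y, G.arc x y → x ≠ y → G.toSimpleGraph.Adj x y := by
    intro x y hxy hne
    exact (SimpleGraph.fromRel_adj _ _ _).2 ⟨hne, Or.inl hxy⟩
  have key : ∀ x, x ≠ v →
      (∃ x', ReachIn G.toSimpleGraph {v}ᶜ x x' ∧ x' ∉ G.InNbhd v) ∨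
      ({u | G.toSimpleGraph.Adj x u}).Subsingleton := by
    intro x hx
    by_cases h : ∃ x', ReachIn G.toSimpleGraph {v}ᶜ x x' ∧ x' ∉ G.InNbhd v
    · exact Or.inl h
    · right
      push_neg at h
      have hxv : G.arc x v := by
        have hx' := h x Relation.ReflTransGen.refl
        rcases hx' with rfl | hx'
        · exact absurd rfl hx
        · exact hx'
      have neigh : ∀ u, G.toSimpleGraph.Adj x u → u = v := by
        intro u hadj
        by_contra huv
        have hstep : ReachIn G.toSimpleGraph {v}ᶜ x u :=
          Relation.ReflTransGen.single ⟨by simpa using hx, by simpa using huv, hadj⟩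
        have hu := h u hstep
        rcases hu with rfl | hu
        · exact huv rfl
        · exact htf x u v ⟨hadj, hadj_arc u v hu huv, hadj_arc x v hxv hx⟩
      intro u hu u' hu'
      rw [neigh u hu, neigh u' hu']
  rcases key a ha with ⟨a', hra, hna⟩ | hs
  · rcases key b hb with ⟨b', hrb, hnb⟩ | hs
    · left
      refine ⟨v, a', hna, b', hnb, ?_⟩
      intro hR
      apply hnot
      have symmStep : Symmetric (fun x y => x ∈ ({v}ᶜ : Set V) ∧ y ∈ ({v}ᶜ : Set V) ∧
          G.toSimpleGraph.Adj x y) := fun x y ⟨h1, h2, h3⟩ => ⟨h2, h1, h3.symm⟩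
      have hmono : ReachIn G.toSimpleGraph {v}ᶜ a' b' := by
        refine Relation.ReflTransGen.mono ?_ _ _ hR
        rintro x y ⟨h1, h2, h3⟩
        refine ⟨?_, ?_, h3⟩
        · simp only [Set.mem_compl_iff, Set.mem_singleton_iff]
          rintro rfl; exact h1 (Set.mem_insert _ _)
        · simp only [Set.mem_compl_iff, Set.mem_singleton_iff]
          rintro rfl; exact h2 (Set.mem_insert _ _)
      exact (hra.trans hmono).trans (@Std.Symm.symm _ _ (@Relation.ReflTransGen.stdSymm _ _ ⟨symmStep⟩) _ _ hrb)
    · exact Or.inr ⟨b, hs⟩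
  · exact Or.inr ⟨a, hs⟩
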